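/- Suppose F⁻¹ : ℝ → [0,ȳ] is globally Lipschitz and for fixed ω two pairs (X̃,K̃), (X̂,K̂) solve the reflected system X_t = x + ∫₀^t κ((μ−β(y+Δ+K_s)) − X_s)ds + σW_t(ω), K_t = min{sup_{0≤s≤t}(F⁻¹(X_s) − (ȳ−(y+Δ)))⁺, ȳ−(y+Δ)}. Then X̃ = X̂ and K̃ = K̂ on [0,∞) (pathwise uniqueness). -/

import Mathlib

open Set

set_option maxHeartbeats 1000000

private lemma abs_min_sub_min' (a b c : ℝ) : |min a c - min b c| ≤ |a - b| := by
  have h3 := le_abs_self (a - b)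
  have h4 := neg_abs_le (a - b)
  rw [abs_le]
  simp only [min_def]
  split_ifs <;> constructor <;> linarith

private lemma csSup_image_le_add {f₁ f₂ : ℝ → ℝ} {s : Set ℝ} (hs : s.Nonempty)
    (hbdd : BddAbove (f₂ '' s)) (ε : ℝ) (h : ∀ u ∈ s, f₁ u ≤ f₂ u + ε) :
    sSup (f₁ '' s) ≤ sSup (f₂ '' s) + ε := by
  apply csSup_le (hs.image _)
  rintro _ ⟨u, hu, rfl⟩
  exact le_trans (h u hu) (add_le_add_left (le_csSup hbdd ⟨u, hu, rfl⟩) ε)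

/-- Pathwise uniqueness for the reflected system: with a globally Lipschitz `F⁻¹` and a
fixed continuous driving path `w`, two solutions of
`X_t = x + ∫₀^t κ((μ−β(y+Δ+K_s)) − X_s)ds + σ w_t`,
`K_t = min{sup_{0≤s≤t}(F⁻¹(X_s) − (ybar−(y+Δ)))⁺, ybar−(y+Δ)}` coincide. -/
theorem stmt17 (κ σ μ β x y Δ ybar : ℝ) (hκ : 0 < κ) (hσ : 0 < σ) (hβ : 0 < β)
    (h0 : 0 ≤ y + Δ) (h1 : y + Δ ≤ ybar)
    (Finv : ℝ → ℝ) (Kbar : NNReal) (hLip : LipschitzWith Kbar Finv)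
    (hrange : ∀ z, Finv z ∈ Icc (0 : ℝ) ybar)
    (w : ℝ → ℝ) (hw : Continuous w)
    (X₁ K₁ X₂ K₂ : ℝ → ℝ) (hX₁c : Continuous X₁) (hX₂c : Continuous X₂)
    (hX₁ : ∀ t ≥ (0 : ℝ),
      X₁ t = x + (∫ s in (0 : ℝ)..t, κ * ((μ - β * (y + Δ + K₁ s)) - X₁ s)) + σ * w t)
    (hK₁ : ∀ t ≥ (0 : ℝ),
      K₁ t = min (sSup ((fun s => max (Finv (X₁ s) - (ybar - (y + Δ))) 0) '' Icc 0 t))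
        (ybar - (y + Δ)))
    (hX₂ : ∀ t ≥ (0 : ℝ),
      X₂ t = x + (∫ s in (0 : ℝ)..t, κ * ((μ - β * (y + Δ + K₂ s)) - X₂ s)) + σ * w t)
    (hK₂ : ∀ t ≥ (0 : ℝ),
      K₂ t = min (sSup ((fun s => max (Finv (X₂ s) - (ybar - (y + Δ))) 0) '' Icc 0 t))
        (ybar - (y + Δ))) :
    ∀ t ≥ (0 : ℝ), X₁ t = X₂ t ∧ K₁ t = K₂ t := by
  intro T hT
  set c : ℝ := ybar - (y + Δ) with hcdef
  have hc0 : 0 ≤ c := by simp [hcdef]; linarith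
  have hK0 : (0 : ℝ) ≤ (Kbar : ℝ) := Kbar.2
  set φ₁ : ℝ → ℝ := fun u => max (Finv (X₁ u) - c) 0 with hφ₁def
  set φ₂ : ℝ → ℝ := fun u => max (Finv (X₂ u) - c) 0 with hφ₂def
  set g : ℝ → ℝ := fun s => sSup ((fun u => |X₁ u - X₂ u|) '' Icc 0 s) with hgdef
  -- basic facts
  have hne : ∀ s : ℝ, 0 ≤ s → (Icc (0:ℝ) s).Nonempty := fun s hs => nonempty_Icc.2 hs
  have hφbdd : ∀ (X : ℝ → ℝ) (s : ℝ),
      BddAbove ((fun u => max (Finv (X u) - c) 0) '' Icc 0 s) := by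
    intro X s
    refine ⟨max ybar 0, ?_⟩
    rintro _ ⟨u, _, rfl⟩
    exact max_le_max (by have := (hrange (X u)).2; linarith) le_rfl
  have hgbdd : ∀ s : ℝ, BddAbove ((fun u => |X₁ u - X₂ u|) '' Icc 0 s) := by
    intro s
    exact isCompact_Icc.bddAbove_image ((hX₁c.sub hX₂c).abs.continuousOn)
  have hg0 : ∀ s : ℝ, 0 ≤ g s := by
    intro s
    apply Real.sSup_nonneg
    rintro _ ⟨u, _, rfl⟩
    exact abs_nonneg _
  have hDg : ∀ s : ℝ, ∀ u ∈ Icc (0:ℝ) s, |X₁ u - X₂ u| ≤ g s := by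
    intro s u hu
    exact le_csSup (hgbdd s) ⟨u, hu, rfl⟩
  have hgmono : ∀ s₁ s₂ : ℝ, 0 ≤ s₁ → s₁ ≤ s₂ → g s₁ ≤ g s₂ := by
    intro s₁ s₂ hs₁ h12
    exact csSup_le_csSup (hgbdd s₂) ((hne s₁ hs₁).image _)
      (image_mono (Icc_subset_Icc_right h12))
  -- Lipschitz bound on K₁ - K₂
  have hφlip : ∀ u : ℝ, φ₁ u ≤ φ₂ u + (Kbar : ℝ) * |X₁ u - X₂ u| ∧
      φ₂ u ≤ φ₁ u + (Kbar : ℝ) * |X₁ u - X₂ u| := by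
    intro u
    have hF : |Finv (X₁ u) - Finv (X₂ u)| ≤ (Kbar : ℝ) * |X₁ u - X₂ u| := by
      have := hLip.dist_le_mul (X₁ u) (X₂ u)
      simpa [Real.dist_eq] using this
    have h1 := abs_le.1 hF
    have hnn : 0 ≤ (Kbar : ℝ) * |X₁ u - X₂ u| := mul_nonneg hK0 (abs_nonneg _)
    constructor <;>
      refine max_le (le_trans (by linarith) (add_le_add_left (le_max_left _ _) _))
        (by positivity)
  have hKdiff : ∀ s : ℝ, 0 ≤ s → |K₁ s - K₂ s| ≤ (Kbar : ℝ) * g s := by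
    intro s hs
    rw [hK₁ s hs, hK₂ s hs]
    refine le_trans (abs_min_sub_min' _ _ _) ?_
    rw [abs_sub_le_iff]
    constructor <;>
    · rw [sub_le_iff_le_add, add_comm]
      refine csSup_image_le_add (hne s hs) (hφbdd _ _) _ ?_
      intro u hu
      rcases hφlip u with ⟨hl, hr⟩
      have := hDg s u hu
      have hK' : (Kbar : ℝ) * |X₁ u - X₂ u| ≤ (Kbar : ℝ) * g s :=
        mul_le_mul_of_nonneg_left this hK0
      simp only [hφ₁def, hφ₂def] at hl hr ⊢
      linarith
  -- integrability of K₁, K₂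
  have hKint : ∀ (X K : ℝ → ℝ), Continuous X →
      (∀ t ≥ (0:ℝ), K t = min (sSup ((fun s => max (Finv (X s) - c) 0) '' Icc 0 t)) c) →
      IntervalIntegrable K MeasureTheory.volume 0 T := by
    intro X K hXc hK
    set M : ℝ → ℝ := fun s => min (sSup ((fun u => max (Finv (X u) - c) 0) '' Icc 0 s)) c
      with hMdef
    have hMmono : MonotoneOn M (uIcc (0:ℝ) T) := by
      rw [uIcc_of_le hT]
      intro s₁ hs₁ s₂ hs₂ h12
      refine min_le_min ?_ le_rfl
      exact csSup_le_csSup (hφbdd X s₂) ((hne s₁ hs₁.1).image _)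
        (image_mono (Icc_subset_Icc_right h12))
    have hMint : IntervalIntegrable M MeasureTheory.volume 0 T :=
      hMmono.intervalIntegrable
    rw [intervalIntegrable_iff] at hMint ⊢
    refine hMint.congr_fun ?_ measurableSet_uIoc
    intro u hu
    rw [uIoc_of_le hT] at hu
    exact (hK u hu.1.le).symm
  have hK₁int := hKint X₁ K₁ hX₁c hK₁
  have hK₂int := hKint X₂ K₂ hX₂c hK₂
  -- integrability of the drift integrands
  have hfint : ∀ (X K : ℝ → ℝ), Continuous X →
      IntervalIntegrable K MeasureTheory.volume 0 T →
      IntervalIntegrable (fun s => κ * ((μ - β * (y + Δ + K s)) - X s))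
        MeasureTheory.volume 0 T := by
    intro X K hXc hKi
    have : (fun s => κ * ((μ - β * (y + Δ + K s)) - X s)) =
        fun s => (κ * (μ - β * (y + Δ)) + (-(κ * β)) * K s) + (-κ) * X s := by
      funext s; ring
    rw [this]
    exact ((intervalIntegrable_const.add (hKi.const_mul _)).add
      ((hXc.intervalIntegrable 0 T).const_mul _))
  have hf₁ := hfint X₁ K₁ hX₁c hK₁int
  have hf₂ := hfint X₂ K₂ hX₂c hK₂int
  -- the difference process and its integral equation
  set G : ℝ → ℝ := fun u => -(κ * β) * (K₁ u - K₂ u) + (-κ) * (X₁ u - X₂ u) with hGdef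
  have hGint : IntervalIntegrable G MeasureTheory.volume 0 T := by
    have : G = fun u => (fun s => κ * ((μ - β * (y + Δ + K₁ s)) - X₁ s)) u -
        (fun s => κ * ((μ - β * (y + Δ + K₂ s)) - X₂ s)) u := by
      funext u; simp [hGdef]; ring
    rw [this]
    exact hf₁.sub hf₂
  have hD : ∀ s : ℝ, s ∈ Icc 0 T → X₁ s - X₂ s = ∫ u in (0:ℝ)..s, G u := by
    intro s hs
    have hsub : uIcc (0:ℝ) s ⊆ uIcc (0:ℝ) T := by
      rw [uIcc_of_le hs.1, uIcc_of_le hT]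
      exact Icc_subset_Icc_right hs.2
    rw [hX₁ s hs.1, hX₂ s hs.1]
    have := intervalIntegral.integral_sub (hf₁.mono_set hsub) (hf₂.mono_set hsub)
    have heq : ∫ u in (0:ℝ)..s,
        (κ * ((μ - β * (y + Δ + K₁ u)) - X₁ u) - κ * ((μ - β * (y + Δ + K₂ u)) - X₂ u)) =
        ∫ u in (0:ℝ)..s, G u := by
      apply intervalIntegral.integral_congr
      intro u _
      simp only [hGdef]; ring
    rw [← heq, this]; ring
  -- constants
  set C : ℝ := κ * β * (Kbar : ℝ) + κ with hCdef
  have hC0 : 0 ≤ C := by positivity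
  have hgint : IntervalIntegrable g MeasureTheory.volume 0 T := by
    apply MonotoneOn.intervalIntegrable
    rw [uIcc_of_le hT]
    intro s₁ hs₁ s₂ _ h12
    exact hgmono s₁ s₂ hs₁.1 h12
  have hCgint : IntervalIntegrable (fun u => C * g u) MeasureTheory.volume 0 T :=
    hgint.const_mul C
  have hGbound : ∀ u ∈ Icc (0:ℝ) T, |G u| ≤ C * g u := by
    intro u hu
    have h1 := hKdiff u hu.1
    have h2 := hDg u u ⟨hu.1, le_rfl⟩
    calc |G u| ≤ κ * β * |K₁ u - K₂ u| + κ * |X₁ u - X₂ u| := by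
          simp only [hGdef]
          refine le_trans (abs_add_le _ _) ?_
          rw [abs_mul, abs_mul]
          have : |-(κ * β)| = κ * β := by rw [abs_neg, abs_of_pos (by positivity)]
          rw [this, abs_neg, abs_of_pos hκ]
      _ ≤ κ * β * ((Kbar : ℝ) * g u) + κ * g u := by
          have := mul_le_mul_of_nonneg_left h1 (le_of_lt (by positivity : (0:ℝ) < κ * β))
          have := mul_le_mul_of_nonneg_left h2 hκ.le
          nlinarith [hβ, hκ]
      _ = C * g u := by simp [hCdef]; ring
  -- main integral inequality for g
  have hgle : ∀ s ∈ Icc (0:ℝ) T, g s ≤ ∫ u in (0:ℝ)..s, C * g u := by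
    intro s hs
    have hsub : ∀ v : ℝ, v ∈ Icc (0:ℝ) s → uIcc (0:ℝ) v ⊆ uIcc (0:ℝ) T := by
      intro v hv
      rw [uIcc_of_le hv.1, uIcc_of_le hT]
      exact Icc_subset_Icc_right (hv.2.trans hs.2)
    apply csSup_le ((hne s hs.1).image _)
    rintro _ ⟨v, hv, rfl⟩
    have hvT : v ∈ Icc (0:ℝ) T := ⟨hv.1, hv.2.trans hs.2⟩
    have step1 : |X₁ v - X₂ v| ≤ ∫ u in (0:ℝ)..v, C * g u := by
      rw [hD v hvT]
      calc |∫ u in (0:ℝ)..v, G u| ≤ ∫ u in (0:ℝ)..v, |G u| := by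
            simpa [Real.norm_eq_abs] using
              intervalIntegral.norm_integral_le_integral_norm (f := G)
                (μ := MeasureTheory.volume) hv.1
        _ ≤ ∫ u in (0:ℝ)..v, C * g u := by
            refine intervalIntegral.integral_mono_on hv.1
              ((hGint.mono_set (hsub v hv)).abs) (hCgint.mono_set (hsub v hv)) ?_
            intro u hu
            exact hGbound u ⟨hu.1, hu.2.trans hvT.2⟩
    refine step1.trans ?_
    have hadd := intervalIntegral.integral_add_adjacent_intervals
      (f := fun u => C * g u) (μ := MeasureTheory.volume) (a := 0) (b := v) (c := s)
      (hCgint.mono_set (hsub v hv))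
      (hCgint.mono_set (by rw [uIcc_of_le hv.2, uIcc_of_le hT]
                           exact Icc_subset_Icc hv.1 hs.2))
    have hnn : 0 ≤ ∫ u in v..s, C * g u := by
      apply intervalIntegral.integral_nonneg hv.2
      intro u hu
      exact mul_nonneg hC0 (hg0 u)
    linarith [hadd]
  -- iterate
  have hiter : ∀ n : ℕ, ∀ s ∈ Icc (0:ℝ) T, g s ≤ g T * (C * s) ^ n / n.factorial := by
    intro n
    induction n with
    | zero =>
        intro s hs
        simpa using hgmono s T hs.1 hs.2
    | succ n ih =>
        intro s hs
        have hsub : uIcc (0:ℝ) s ⊆ uIcc (0:ℝ) T := by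
          rw [uIcc_of_le hs.1, uIcc_of_le hT]
          exact Icc_subset_Icc_right hs.2
        set r : ℝ := C ^ (n+1) * g T / n.factorial with hrdef
        have step : ∫ u in (0:ℝ)..s, C * g u ≤ ∫ u in (0:ℝ)..s, r * u ^ n := by
          refine intervalIntegral.integral_mono_on hs.1 (hCgint.mono_set hsub)
            (((continuous_pow n).intervalIntegrable 0 s).const_mul _) ?_
          intro u hu
          have h1 := mul_le_mul_of_nonneg_left (ih u ⟨hu.1, hu.2.trans hs.2⟩) hC0
          have h2 : C * (g T * (C * u) ^ n / n.factorial) = r * u ^ n := by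
            rw [hrdef, mul_pow]; ring
          linarith [h2 ▸ h1]
        have hcomp : ∫ u in (0:ℝ)..s, r * u ^ n =
            g T * (C * s) ^ (n + 1) / (n + 1).factorial := by
          rw [intervalIntegral.integral_const_mul, integral_pow, hrdef]
          have hfac : ((n+1).factorial : ℝ) = (n + 1) * n.factorial := by
            rw [Nat.factorial_succ]; push_cast; ring
          have hfne : (n.factorial : ℝ) ≠ 0 := Nat.cast_ne_zero.2 n.factorial_ne_zero
          have hn1 : ((n:ℝ) + 1) ≠ 0 := by positivity
          rw [hfac, mul_pow]
          field_simp
          ring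
        calc g s ≤ ∫ u in (0:ℝ)..s, C * g u := hgle s hs
          _ ≤ ∫ u in (0:ℝ)..s, r * u ^ n := step
          _ = _ := hcomp
  -- take limit
  have hTmem : T ∈ Icc (0:ℝ) T := ⟨hT, le_rfl⟩
  have hlim : Filter.Tendsto (fun n : ℕ => g T * (C * T) ^ n / n.factorial)
      Filter.atTop (nhds 0) := by
    have := (FloorSemiring.tendsto_pow_div_factorial_atTop (C * T)).const_mul (g T)
    simpa [mul_div_assoc] using this
  have hgT0 : g T ≤ 0 := ge_of_tendsto' hlim (fun n => hiter n T hTmem)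
  have hgT : g T = 0 := le_antisymm hgT0 (hg0 T)
  have hXeq : X₁ T = X₂ T := by
    have := hDg T T hTmem
    rw [hgT] at this
    have := abs_nonpos_iff.1 this
    linarith [sub_eq_zero.1 this]
  refine ⟨hXeq, ?_⟩
  have := hKdiff T hT
  rw [hgT, mul_zero] at this
  have := abs_nonpos_iff.1 this
  linarith [sub_eq_zero.1 this]
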